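/- Let G be a connected simple graph on vertex set Fin N with N ≥ 2, let L be its real Laplacian matrix, let λ₂ := sInf(spectrum ℝ L \ {0}) be its smallest nonzero eigenvalue, and let diam(G) denote the diameter of G (the maximum over vertex pairs of the graph distance). Then diam(G) ≥ 4 / (N·λ₂); equivalently, N · λ₂ · diam(G) ≥ 4. -/

import Mathlib

open Matrix Finset

lemma aux_mem_spectrum_iff {N : ℕ} (M : Matrix (Fin N) (Fin N) ℝ) {μ : ℝ} :
    μ ∈ spectrum ℝ M ↔ ∃ v, v ≠ 0 ∧ M *ᵥ v = μ • v := by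
  have key : ∀ v : Fin N → ℝ,
      (algebraMap ℝ (Matrix (Fin N) (Fin N) ℝ) μ - M) *ᵥ v = μ • v - M *ᵥ v := by
    intro v
    rw [sub_mulVec, Algebra.algebraMap_eq_smul_one, smul_mulVec, one_mulVec]
  rw [spectrum.mem_iff, Matrix.isUnit_iff_isUnit_det, isUnit_iff_ne_zero, not_ne_iff,
      ← Matrix.exists_mulVec_eq_zero_iff]
  refine exists_congr fun v => and_congr_right fun _ => ?_
  rw [key, sub_eq_zero, eq_comm]

noncomputable def auxF {N : ℕ} (x : Fin N → ℝ) : Sym2 (Fin N) → ℝ :=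
  Sym2.lift ⟨fun i j => (x i - x j)^2, fun i j => by ring⟩

lemma auxF_nonneg {N : ℕ} (x : Fin N → ℝ) (e : Sym2 (Fin N)) : 0 ≤ auxF x e := by
  induction e using Sym2.ind with
  | _ i j => exact sq_nonneg _

lemma aux_walk_sq_le {N : ℕ} (G : SimpleGraph (Fin N)) (x : Fin N → ℝ) {u v : Fin N}
    (w : G.Walk u v) :
    (x u - x v)^2 ≤ (w.length : ℝ) * (w.edges.map (auxF x)).sum := by
  induction w with
  | nil => simp
  | @cons a b c h p ih =>
    have hS : 0 ≤ (p.edges.map (auxF x)).sum := by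
      apply List.sum_nonneg
      intro y hy
      obtain ⟨e, _, rfl⟩ := List.mem_map.mp hy
      exact auxF_nonneg x e
    rw [SimpleGraph.Walk.edges_cons, SimpleGraph.Walk.length_cons]
    set n : ℝ := (p.length : ℝ) with hn
    have hn0 : 0 ≤ n := by positivity
    set S : ℝ := (p.edges.map (auxF x)).sum with hSdef
    have hF : auxF x s(a, b) = (x a - x b)^2 := rfl
    rw [List.map_cons, List.sum_cons, hF]
    push_cast
    set A : ℝ := x a - x b
    set C : ℝ := x b - x c
    have hx : x a - x c = A + C := by ring
    rw [hx, ← hn, ← hSdef]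
    rcases eq_or_lt_of_le hn0 with h0 | hpos
    · have hc : C = 0 := by nlinarith [ih]
      rw [hc, ← h0]
      nlinarith [hS]
    · nlinarith [ih, sq_nonneg (n * A - C), mul_pos hpos hpos]

lemma aux_sum_adj_eq {N : ℕ} (G : SimpleGraph (Fin N)) [DecidableRel G.Adj] (x : Fin N → ℝ) :
    ∑ i, ∑ j, (if G.Adj i j then (x i - x j)^2 else 0)
      = 2 * ∑ e ∈ G.edgeFinset, auxF x e := by
  classical
  have h1 : ∑ i, ∑ j, (if G.Adj i j then (x i - x j)^2 else 0)
      = ∑ p ∈ (univ ×ˢ univ).filter (fun p : Fin N × Fin N => G.Adj p.1 p.2),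
          (x p.1 - x p.2)^2 := by
    rw [sum_filter, Finset.sum_product]
  have hmaps : ∀ p ∈ (univ ×ˢ univ).filter (fun p : Fin N × Fin N => G.Adj p.1 p.2),
      Sym2.mk p.1 p.2 ∈ G.edgeFinset := by
    intro p hp
    rw [Finset.mem_filter] at hp
    rw [SimpleGraph.mem_edgeFinset]
    exact hp.2
  rw [h1]
  rw [← Finset.sum_fiberwise_of_maps_to hmaps (f := fun p : Fin N × Fin N => (x p.1 - x p.2)^2)]
  rw [Finset.mul_sum]
  refine Finset.sum_congr rfl fun e he => ?_
  rw [SimpleGraph.mem_edgeFinset] at he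
  induction e using Sym2.ind with
  | _ a b =>
    have hab : G.Adj a b := he
    have hfib : ((univ ×ˢ univ).filter (fun p : Fin N × Fin N => G.Adj p.1 p.2)).filter
        (fun p => Sym2.mk p.1 p.2 = s(a, b)) = {(a, b), (b, a)} := by
      ext ⟨p1, p2⟩
      simp only [Finset.mem_filter, Finset.mem_product, Finset.mem_univ, true_and,
        Finset.mem_insert, Finset.mem_singleton, Prod.mk.injEq, Sym2.eq_iff]
      constructor
      · rintro ⟨_, (⟨rfl, rfl⟩ | ⟨rfl, rfl⟩)⟩
        · left; exact ⟨rfl, rfl⟩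
        · right; exact ⟨rfl, rfl⟩
      · rintro (⟨rfl, rfl⟩ | ⟨rfl, rfl⟩)
        · exact ⟨hab, Or.inl ⟨rfl, rfl⟩⟩
        · exact ⟨hab.symm, Or.inr ⟨rfl, rfl⟩⟩
    rw [hfib, Finset.sum_pair (by simp [hab.ne])]
    have : auxF x s(a, b) = (x a - x b)^2 := rfl
    rw [this]; ring

/-- For a connected simple graph `G` on `Fin N` (`N ≥ 2`) with
Laplacian `L` and algebraic connectivity `λ₂ = sInf (spectrum ℝ L \ {0})`, the
diameter satisfies `diam(G) ≥ 4 / (N·λ₂)`. -/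
theorem diam_ge_four_div_N_lambda2
    (N : ℕ) (hN : 2 ≤ N) (G : SimpleGraph (Fin N)) [DecidableRel G.Adj]
    (hG : G.Connected) :
    4 / ((N : ℝ) * sInf (spectrum ℝ (G.lapMatrix ℝ) \ {0})) ≤ (G.diam : ℝ) := by
  classical
  haveI : Nontrivial (Fin N) := Fin.nontrivial_iff_two_le.mpr hN
  set lam := sInf (spectrum ℝ (G.lapMatrix ℝ) \ {0}) with hlamdef
  have hPSD : (G.lapMatrix ℝ).PosSemidef := SimpleGraph.posSemidef_lapMatrix ℝ G
  -- The Laplacian is nonzero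
  have hLne : G.lapMatrix ℝ ≠ 0 := by
    intro h0
    obtain ⟨a, b, hab⟩ := exists_pair_ne (Fin N)
    have h1 := (SimpleGraph.lapMatrix_mulVec_eq_zero_iff_forall_reachable (G := G)
      (x := fun i => if i = a then (1:ℝ) else 0)).mp
      (by rw [h0, Matrix.zero_mulVec]) a b (hG a b)
    simp [hab.symm] at h1
  -- a nonzero eigenvalue exists
  obtain ⟨v0, t, ht, hv0, heig0⟩ := hPSD.1.exists_eigenvector_of_ne_zero hLne
  have hSne : (spectrum ℝ (G.lapMatrix ℝ) \ {0}).Nonempty :=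
    ⟨t, (aux_mem_spectrum_iff _).mpr ⟨v0, hv0, heig0⟩, ht⟩
  have hSfin : (spectrum ℝ (G.lapMatrix ℝ) \ {0}).Finite :=
    (Matrix.finite_spectrum _).subset Set.diff_subset
  have hlamS : lam ∈ spectrum ℝ (G.lapMatrix ℝ) \ {0} := hSne.csInf_mem hSfin
  obtain ⟨x, hx0, hxeig⟩ := (aux_mem_spectrum_iff _).mp hlamS.1
  have hlamne : lam ≠ 0 := hlamS.2
  set s := ∑ i, x i ^ 2 with hs
  have hspos : 0 < s := by
    obtain ⟨i, hi⟩ := Function.ne_iff.mp hx0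
    exact Finset.sum_pos' (fun j _ => sq_nonneg _) ⟨i, Finset.mem_univ i,
      lt_of_le_of_ne (sq_nonneg _) (Ne.symm (pow_ne_zero 2 hi))⟩
  -- quadratic form value
  have hQ : x ⬝ᵥ (G.lapMatrix ℝ *ᵥ x) = lam * s := by
    rw [hxeig, dotProduct_smul, smul_eq_mul]
    congr 1
    simp [dotProduct, hs, sq]
  have hlampos : 0 < lam := by
    have h4 := hPSD.dotProduct_mulVec_nonneg x
    rw [star_trivial, hQ] at h4
    have hnn : 0 ≤ lam := by nlinarith [h4, hspos]
    exact lt_of_le_of_ne hnn (Ne.symm hlamne)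
  -- the entries of x sum to zero
  have hsum0 : ∑ i, x i = 0 := by
    have h5 : ∑ i, (G.lapMatrix ℝ *ᵥ x) i = lam * ∑ i, x i := by
      rw [hxeig]
      simp [Finset.mul_sum]
    have h6 : ∑ i, (G.lapMatrix ℝ *ᵥ x) i = 0 := by
      simp only [mulVec, dotProduct]
      rw [Finset.sum_comm]
      refine Finset.sum_eq_zero fun j _ => ?_
      rw [← Finset.sum_mul]
      have hcol : ∑ i, G.lapMatrix ℝ i j = 0 := by
        have hrow := congrFun (G.lapMatrix_mulVec_const_eq_zero (R := ℝ)) j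
        simp only [mulVec, dotProduct, mul_one, Pi.zero_apply] at hrow
        rw [← hrow]
        exact Finset.sum_congr rfl fun i _ => (SimpleGraph.isSymm_lapMatrix (R := ℝ) G).apply j i
      rw [hcol, zero_mul]
    rw [h6] at h5
    exact (mul_eq_zero.mp h5.symm).resolve_left hlamne
  -- extremal vertices
  obtain ⟨u, -, hu⟩ := Finset.exists_max_image (univ : Finset (Fin N)) x univ_nonempty
  obtain ⟨w, -, hw⟩ := Finset.exists_min_image (univ : Finset (Fin N)) x univ_nonempty
  -- 4 s ≤ N (x u - x w)^2
  have key2 : 4 * s ≤ (N : ℝ) * (x u - x w)^2 := by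
    have h1 : ∀ i : Fin N, x i ^ 2 ≤ (x u + x w) * x i - x u * x w := fun i => by
      nlinarith [mul_nonneg (sub_nonneg.2 (hu i (mem_univ i))) (sub_nonneg.2 (hw i (mem_univ i)))]
    have h2 : s ≤ (x u + x w) * (∑ i, x i) - (N : ℝ) * (x u * x w) := by
      calc s ≤ ∑ i, ((x u + x w) * x i - x u * x w) := Finset.sum_le_sum fun i _ => h1 i
        _ = (x u + x w) * (∑ i, x i) - (N : ℝ) * (x u * x w) := by
            rw [Finset.sum_sub_distrib, ← Finset.mul_sum, Finset.sum_const, Finset.card_univ,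
              Fintype.card_fin, nsmul_eq_mul]
    rw [hsum0, mul_zero, zero_sub] at h2
    have hNnn : (0:ℝ) ≤ (N : ℝ) := Nat.cast_nonneg N
    nlinarith [sq_nonneg (x u + x w), mul_nonneg hNnn (sq_nonneg (x u + x w))]
  -- (x u - x w)^2 ≤ diam * (lam * s)
  have hediam : G.ediam ≠ ⊤ := by
    obtain ⟨a, b, hab⟩ := G.exists_edist_eq_ediam_of_finite
    rw [← hab]
    exact SimpleGraph.edist_ne_top_iff_reachable.mpr (hG a b)
  have key3 : (x u - x w)^2 ≤ (G.diam : ℝ) * (lam * s) := by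
    obtain ⟨w0, hw0len⟩ := hG.exists_walk_length_eq_dist u w
    set p := w0.bypass with hp_def
    have hp : p.IsPath := w0.bypass_isPath
    have hlen : p.length ≤ G.diam := by
      refine le_trans (le_trans w0.length_bypass_le (le_of_eq hw0len)) ?_
      exact SimpleGraph.dist_le_diam hediam
    have step1 : (x u - x w)^2 ≤ (p.length : ℝ) * (p.edges.map (auxF x)).sum :=
      aux_walk_sq_le G x p
    have step2 : (p.edges.map (auxF x)).sum = ∑ e ∈ p.edges.toFinset, auxF x e :=
      (List.sum_toFinset _ hp.edges_nodup).symm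
    have step3 : ∑ e ∈ p.edges.toFinset, auxF x e ≤ ∑ e ∈ G.edgeFinset, auxF x e := by
      refine Finset.sum_le_sum_of_subset_of_nonneg ?_ fun e _ _ => auxF_nonneg x e
      intro e he
      rw [List.mem_toFinset] at he
      rw [SimpleGraph.mem_edgeFinset]
      exact p.edges_subset_edgeSet he
    have step4 : ∑ e ∈ G.edgeFinset, auxF x e = lam * s := by
      have hadj := aux_sum_adj_eq G x
      have hq2 := SimpleGraph.lapMatrix_toLinearMap₂' ℝ G x
      rw [Matrix.toLinearMap₂'_apply'] at hq2
      rw [hQ] at hq2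
      rw [hadj] at hq2
      linarith
    have hedge_nn : 0 ≤ ∑ e ∈ p.edges.toFinset, auxF x e :=
      Finset.sum_nonneg fun e _ => auxF_nonneg x e
    have hlenR : (p.length : ℝ) ≤ (G.diam : ℝ) := Nat.cast_le.mpr hlen
    calc (x u - x w)^2 ≤ (p.length : ℝ) * (p.edges.map (auxF x)).sum := step1
      _ = (p.length : ℝ) * ∑ e ∈ p.edges.toFinset, auxF x e := by rw [step2]
      _ ≤ (G.diam : ℝ) * ∑ e ∈ p.edges.toFinset, auxF x e :=
          mul_le_mul_of_nonneg_right hlenR hedge_nn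
      _ ≤ (G.diam : ℝ) * ∑ e ∈ G.edgeFinset, auxF x e := by
          refine mul_le_mul_of_nonneg_left step3 ?_
          positivity
      _ = (G.diam : ℝ) * (lam * s) := by rw [step4]
  -- conclude
  have hNpos : (0:ℝ) < (N : ℝ) := by
    have : 0 < N := lt_of_lt_of_le two_pos hN
    exact_mod_cast this
  rw [div_le_iff₀ (mul_pos hNpos hlampos)]
  nlinarith [key2, key3, hspos, mul_le_mul_of_nonneg_left key3 (le_of_lt hNpos)]
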